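/- Let σ be a ranking of a set S drawn from the PL model with parameter θ*, let p ∈ [|S|−1], and let G_p be the position-p rank-breaking graph of σ. For any two distinct items i, i′ ∈ S: (1) P[σ^{−1}(i) < σ^{−1}(i′) | (i,i′) ∈ G_p] = e^{θ*_i}/(e^{θ*_i} + e^{θ*_{i′}}); and (2) the same identity holds conditioning additionally on the identity (and internal order) of the set of items ranked above position p, i.e., P[σ^{−1}(i) < σ^{−1}(i′) | (i,i′) ∈ G_p and {i″ ∈ S : σ^{−1}(i″) < p}] = e^{θ*_i}/(e^{θ*_i} + e^{θ*_{i′}}). -/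

import Mathlib

open Real

noncomputable section

/- A ranking of a finite set `S`: a bijection from positions `Fin S.card`
(position `0` is the highest rank) to the elements of `S`. -/
abbrev Ranking {ι : Type*} [DecidableEq ι] (S : Finset ι) := Fin S.card ≃ {x // x ∈ S}

/- The Plackett–Luce probability of observing the ranking `σ` of the set `S`,
under parameter `θ`. -/
noncomputable def PLProb {ι : Type*} [DecidableEq ι] (θ : ι → ℝ) (S : Finset ι)
    (σ : Ranking S) : ℝ :=
  ∏ a : Fin S.card,
    (Real.exp (θ (σ a).1) /
      ∑ a' ∈ Finset.univ.filter (fun a' => a ≤ a'), Real.exp (θ (σ a').1))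

/- The (1-based) position at which item `i` is ranked by `σ`. -/
def rankOf {ι : Type*} [DecidableEq ι] {S : Finset ι} (σ : Ranking S)
    (i : {x // x ∈ S}) : ℕ := (σ.symm i).val + 1

/- Probability of an event under the PL model for a single ranking of `S`. -/
open Classical in
noncomputable def PLprobEvent {ι : Type*} [DecidableEq ι] (θ : ι → ℝ) (S : Finset ι)
    (E : Ranking S → Prop) : ℝ :=
  ∑ σ : Ranking S, if E σ then PLProb θ S σ else 0

/- Probability of an event for `n` independent PL rankings of fixed offer sets. -/
open Classical in
noncomputable def jointProb {d n : ℕ} (θ : Fin d → ℝ) (S : Fin n → Finset (Fin d))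
    (E : (∀ j, Ranking (S j)) → Prop) : ℝ :=
  ∑ σ : (∀ j, Ranking (S j)), if E σ then ∏ j, PLProb θ (S j) (σ j) else 0

/- The parameter space `Ω_b`. -/
def OmegaB {d : ℕ} (b : ℝ) (θ : Fin d → ℝ) : Prop :=
  (∑ i, θ i) = 0 ∧ ∀ i, |θ i| ≤ b

/- Contribution to the rank-breaking log-likelihood from the separator at
(1-based) position `p` of the ranking `σ`. -/
open Classical in
noncomputable def rbTerm {d : ℕ} (θ : Fin d → ℝ) {S : Finset (Fin d)} (σ : Ranking S)
    (p : ℕ) : ℝ :=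
  ∑ i ∈ S.attach, ∑ i' ∈ S.attach,
    if rankOf σ i' = p ∧ p < rankOf σ i then
      θ i'.1 - Real.log (Real.exp (θ i.1) + Real.exp (θ i'.1))
    else 0

/- The rank-breaking log-likelihood. -/
noncomputable def LRB {d n : ℕ} (S : Fin n → Finset (Fin d)) (ℓ : Fin n → ℕ)
    (p : (j : Fin n) → Fin (ℓ j) → ℕ) (lam : (j : Fin n) → Fin (ℓ j) → ℝ)
    (σ : ∀ j, Ranking (S j)) (θ : Fin d → ℝ) : ℝ :=
  ∑ j, ∑ a, lam j a * rbTerm θ (σ j) (p j a)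

/- The rank-one matrix `(e_i - e_{i'}) (e_i - e_{i'})ᵀ`. -/
noncomputable def pairMatrix {d : ℕ} (i i' : Fin d) : Matrix (Fin d) (Fin d) ℝ :=
  Matrix.vecMulVec (Pi.single i 1 - Pi.single i' 1) (Pi.single i 1 - Pi.single i' 1)

/- Weighted comparison-graph Laplacian `Σ_j w_j Σ_{i<i' ∈ S_j} (e_i-e_{i'})(e_i-e_{i'})ᵀ`. -/
open Classical in
noncomputable def graphLaplacian {d n : ℕ} (S : Fin n → Finset (Fin d)) (w : Fin n → ℝ) :
    Matrix (Fin d) (Fin d) ℝ :=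
  ∑ j, w j • ∑ i ∈ S j, ∑ i' ∈ S j, if i < i' then pairMatrix i i' else 0

/- The eigenvalues of a Hermitian matrix, sorted in increasing order. -/
noncomputable def sortedEig {d : ℕ} {M : Matrix (Fin d) (Fin d) ℝ} (hM : M.IsHermitian) :
    Fin d → ℝ :=
  hM.eigenvalues ∘ Tuple.sort hM.eigenvalues

/- Euclidean norm of a vector in `ℝ^m`. -/
noncomputable def l2norm {m : ℕ} (v : Fin m → ℝ) : ℝ := Real.sqrt (∑ i, (v i) ^ 2)

end

section Helpers

variable {ι : Type*} [DecidableEq ι] {S : Finset ι}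

lemma card_pos_of_mem (x : {y // y ∈ S}) : 0 < S.card := Finset.card_pos.mpr ⟨x.1, x.2⟩

def consFun (x : {y // y ∈ S}) (τ : Ranking (S.erase x.1)) : Fin S.card → {y // y ∈ S} :=
  fun a =>
    if ha : a.val = 0 then x
    else
      have h1 : a.val - 1 < (S.erase x.1).card := by
        rw [Finset.card_erase_of_mem x.2]; have := a.isLt; omega
      ⟨(τ ⟨a.val - 1, h1⟩).1, Finset.mem_of_mem_erase (τ ⟨a.val - 1, h1⟩).2⟩

def consInv (x : {y // y ∈ S}) (τ : Ranking (S.erase x.1)) : {y // y ∈ S} → Fin S.card :=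
  fun y =>
    if hy : y.1 = x.1 then ⟨0, card_pos_of_mem x⟩
    else
      have hm : y.1 ∈ S.erase x.1 := Finset.mem_erase.mpr ⟨hy, y.2⟩
      ⟨(τ.symm ⟨y.1, hm⟩).val + 1, by
        have h2 := (τ.symm ⟨y.1, hm⟩).isLt
        have hE := Finset.card_erase_of_mem x.2
        have h0 := card_pos_of_mem x
        omega⟩

lemma consFun_zero (x : {y // y ∈ S}) (τ : Ranking (S.erase x.1)) (h : 0 < S.card) :
    consFun x τ ⟨0, h⟩ = x := by simp [consFun]

lemma consFun_succ (x : {y // y ∈ S}) (τ : Ranking (S.erase x.1))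
    (b : Fin (S.erase x.1).card) (h : b.val + 1 < S.card) :
    consFun x τ ⟨b.val + 1, h⟩ = ⟨(τ b).1, Finset.mem_of_mem_erase (τ b).2⟩ := by
  have hb : (⟨b.val + 1, h⟩ : Fin S.card).val ≠ 0 := by simp
  rw [consFun, dif_neg hb]
  congr 2 <;> try (apply Fin.ext; simp)

lemma consInv_self (x : {y // y ∈ S}) (τ : Ranking (S.erase x.1)) :
    consInv x τ x = ⟨0, card_pos_of_mem x⟩ := by simp [consInv]

lemma consInv_ne (x : {y // y ∈ S}) (τ : Ranking (S.erase x.1)) (y : {y // y ∈ S})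
    (hy : y.1 ≠ x.1) :
    consInv x τ y = ⟨(τ.symm ⟨y.1, Finset.mem_erase.mpr ⟨hy, y.2⟩⟩).val + 1, by
        have h2 := (τ.symm ⟨y.1, Finset.mem_erase.mpr ⟨hy, y.2⟩⟩).isLt
        have hE := Finset.card_erase_of_mem x.2
        have h0 := card_pos_of_mem x
        omega⟩ := by
  rw [consInv, dif_neg hy]

def consR (x : {y // y ∈ S}) (τ : Ranking (S.erase x.1)) : Ranking S where
  toFun := consFun x τ
  invFun := consInv x τ
  left_inv := by
    intro a
    by_cases ha : a.val = 0
    · have : a = ⟨0, card_pos_of_mem x⟩ := Fin.ext ha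
      rw [this, consFun_zero, consInv_self]
    · have h1 : a.val - 1 < (S.erase x.1).card := by
        rw [Finset.card_erase_of_mem x.2]; have := a.isLt; omega
      set b : Fin (S.erase x.1).card := ⟨a.val - 1, h1⟩ with hbdef
      have hab : a = ⟨b.val + 1, by have := a.isLt; simp [hbdef]; omega⟩ := by
        apply Fin.ext; simp [hbdef]; omega
      rw [hab, consFun_succ]
      have hne : (τ b).1 ≠ x.1 := (Finset.mem_erase.mp (τ b).2).1
      rw [consInv_ne _ _ _ hne]
      apply Fin.ext
      simp only []
      have : (⟨(τ b).1, Finset.mem_erase.mpr ⟨hne, Finset.mem_of_mem_erase (τ b).2⟩⟩ :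
          {y // y ∈ S.erase x.1}) = τ b := Subtype.ext rfl
      rw [this, Equiv.symm_apply_apply]
  right_inv := by
    intro y
    by_cases hy : y.1 = x.1
    · have : y = x := Subtype.ext hy
      rw [this, consInv_self, consFun_zero]
    · rw [consInv_ne _ _ _ hy, consFun_succ]
      apply Subtype.ext
      simp [Equiv.apply_symm_apply]

lemma consR_apply_zero (x : {y // y ∈ S}) (τ : Ranking (S.erase x.1)) (h : 0 < S.card) :
    consR x τ ⟨0, h⟩ = x := consFun_zero x τ h

lemma consR_apply_succ (x : {y // y ∈ S}) (τ : Ranking (S.erase x.1))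
    (b : Fin (S.erase x.1).card) (h : b.val + 1 < S.card) :
    consR x τ ⟨b.val + 1, h⟩ = ⟨(τ b).1, Finset.mem_of_mem_erase (τ b).2⟩ :=
  consFun_succ x τ b h

lemma consR_symm_self (x : {y // y ∈ S}) (τ : Ranking (S.erase x.1)) :
    (consR x τ).symm x = ⟨0, card_pos_of_mem x⟩ := consInv_self x τ

lemma consR_symm_ne (x : {y // y ∈ S}) (τ : Ranking (S.erase x.1)) (i : ι) (hi : i ∈ S)
    (hne : i ≠ x.1) :
    ((consR x τ).symm ⟨i, hi⟩).val = (τ.symm ⟨i, Finset.mem_erase.mpr ⟨hne, hi⟩⟩).val + 1 := by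
  have := consInv_ne x τ ⟨i, hi⟩ hne
  rw [show (consR x τ).symm ⟨i, hi⟩ = consInv x τ ⟨i, hi⟩ from rfl, this]

lemma rankOf_consR_self (x : {y // y ∈ S}) (τ : Ranking (S.erase x.1)) :
    rankOf (consR x τ) x = 1 := by
  rw [rankOf, consR_symm_self]

lemma rankOf_consR_ne (x : {y // y ∈ S}) (τ : Ranking (S.erase x.1)) (i : ι) (hi : i ∈ S)
    (hne : i ≠ x.1) :
    rankOf (consR x τ) ⟨i, hi⟩ =
      rankOf τ ⟨i, Finset.mem_erase.mpr ⟨hne, hi⟩⟩ + 1 := by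
  rw [rankOf, rankOf, consR_symm_ne x τ i hi hne]

lemma rankOf_pos {σ : Ranking S} {i : {x // x ∈ S}} : 1 ≤ rankOf σ i := by
  rw [rankOf]; omega

end Helpers
section Helpers2
set_option linter.unusedSectionVars false

lemma fin_split_sum {M : Type*} [AddCommMonoid M] {n m : ℕ} (h : n = m + 1) (g : Fin n → M) :
    ∑ a, g a = g ⟨0, by omega⟩ + ∑ c : Fin m, g ⟨c.val + 1, by omega⟩ := by
  subst h
  rw [Fin.sum_univ_succ]
  rfl

lemma fin_split_prod {M : Type*} [CommMonoid M] {n m : ℕ} (h : n = m + 1) (g : Fin n → M) :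
    ∏ a, g a = g ⟨0, by omega⟩ * ∏ c : Fin m, g ⟨c.val + 1, by omega⟩ := by
  subst h
  rw [Fin.prod_univ_succ]
  rfl

variable {ι : Type*} [DecidableEq ι] {S : Finset ι}

lemma sum_exp_univ (θ : ι → ℝ) (σ : Ranking S) :
    ∑ a : Fin S.card, Real.exp (θ (σ a).1) = ∑ y ∈ S, Real.exp (θ y) := by
  rw [← Finset.sum_coe_sort S (fun y => Real.exp (θ y))]
  exact Equiv.sum_comp σ (fun y => Real.exp (θ y.1))

lemma consR_val_succ (x : {y // y ∈ S}) (τ : Ranking (S.erase x.1))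
    {v : ℕ} (h : v + 1 < S.card) (hv : v < (S.erase x.1).card) :
    ((consR x τ) ⟨v + 1, h⟩).1 = (τ ⟨v, hv⟩).1 := by
  have := consR_apply_succ x τ ⟨v, hv⟩ (by simpa using h)
  rw [show (⟨v+1, h⟩ : Fin S.card) = ⟨(⟨v, hv⟩ : Fin (S.erase x.1).card).val + 1,
    by simpa using h⟩ from rfl, this]

lemma denom_consR (θ : ι → ℝ) (x : {y // y ∈ S}) (τ : Ranking (S.erase x.1))
    (b : Fin (S.erase x.1).card) (hk1 : b.val + 1 < S.card) :
    ∑ a' ∈ Finset.univ.filter (fun a' => (⟨b.val + 1, hk1⟩ : Fin S.card) ≤ a'),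
        Real.exp (θ ((consR x τ) a').1)
      = ∑ c' ∈ Finset.univ.filter (fun c' => b ≤ c'),
          Real.exp (θ (τ c').1) := by
  have hE : (S.erase x.1).card = S.card - 1 := Finset.card_erase_of_mem x.2
  refine Finset.sum_nbij'
    (i := fun a' => (⟨a'.val - 1, by have := a'.isLt; omega⟩ : Fin (S.erase x.1).card))
    (j := fun c' => (⟨c'.val + 1, by have := c'.isLt; omega⟩ : Fin S.card))
    ?_ ?_ ?_ ?_ ?_
  · intro a' ha'
    simp only [Finset.mem_filter, Finset.mem_univ, true_and, Fin.le_def] at ha' ⊢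
    omega
  · intro c' hc'
    simp only [Finset.mem_filter, Finset.mem_univ, true_and, Fin.le_def] at hc' ⊢
    omega
  · intro a' ha'
    simp only [Finset.mem_filter, Finset.mem_univ, true_and, Fin.le_def] at ha'
    apply Fin.ext
    show a'.val - 1 + 1 = a'.val
    omega
  · intro c' hc'
    apply Fin.ext
    show c'.val + 1 - 1 = c'.val
    omega
  · intro a' ha'
    simp only [Finset.mem_filter, Finset.mem_univ, true_and, Fin.le_def] at ha'
    have hlt : a'.val - 1 + 1 < S.card := by have := a'.isLt; omega
    have hv : a'.val - 1 < (S.erase x.1).card := by have := a'.isLt; omega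
    have key := consR_val_succ x τ (v := a'.val - 1) hlt hv
    have h2 : (⟨a'.val - 1 + 1, hlt⟩ : Fin S.card) = a' :=
      Fin.ext (show a'.val - 1 + 1 = a'.val by omega)
    rw [h2] at key
    rw [key]

lemma factor_consR (θ : ι → ℝ) (x : {y // y ∈ S}) (τ : Ranking (S.erase x.1))
    (c' : Fin (S.erase x.1).card) (h1 : c'.val + 1 < S.card) :
    Real.exp (θ (τ c').1) /
        (∑ a'' ∈ Finset.univ.filter (fun a'' => c' ≤ a''), Real.exp (θ (τ a'').1))
      = Real.exp (θ ((consR x τ) ⟨c'.val + 1, h1⟩).1) /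
        (∑ a'' ∈ Finset.univ.filter (fun a'' => (⟨c'.val + 1, h1⟩ : Fin S.card) ≤ a''),
          Real.exp (θ ((consR x τ) a'').1)) := by
  rw [consR_val_succ x τ h1 c'.isLt, denom_consR θ x τ c' h1]

lemma PLProb_consR (θ : ι → ℝ) (x : {y // y ∈ S}) (τ : Ranking (S.erase x.1)) :
    PLProb θ S (consR x τ) =
      Real.exp (θ x.1) / (∑ y ∈ S, Real.exp (θ y)) * PLProb θ (S.erase x.1) τ := by
  have hE : (S.erase x.1).card = S.card - 1 := Finset.card_erase_of_mem x.2
  obtain ⟨m, hm⟩ : ∃ m, S.card = m + 1 :=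
    ⟨S.card - 1, by have := card_pos_of_mem x; omega⟩
  have hE' : (S.erase x.1).card = m := by omega
  rw [PLProb, fin_split_prod hm]
  congr 1
  · -- first factor
    rw [consR_apply_zero]
    congr 1
    rw [Finset.filter_true_of_mem (fun a' _ => by rw [Fin.le_def]; exact Nat.zero_le _)]
    exact sum_exp_univ θ (consR x τ)
  · -- remaining factors
    rw [PLProb]
    refine (Fintype.prod_equiv (finCongr hE') _ _ (fun c' => ?_)).symm
    have h1 : c'.val + 1 < S.card := by have := c'.isLt; omega
    exact factor_consR θ x τ c' h1
end Helpers2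
section Helpers3
set_option linter.unusedSectionVars false
open Nat
variable {ι : Type*} [DecidableEq ι] {S : Finset ι}

lemma consR_bijective (hS : 0 < S.card) :
    Function.Bijective (fun q : (Σ x : {y // y ∈ S}, Ranking (S.erase x.1)) =>
      consR q.1 q.2) := by
  rw [Fintype.bijective_iff_injective_and_card]
  constructor
  · rintro ⟨x, τ⟩ ⟨x', τ'⟩ h
    simp only at h
    have hx : x = x' := by
      have h0 := congrArg (fun σ : Ranking S => σ ⟨0, hS⟩) h
      simpa [consR_apply_zero] using h0
    subst hx
    have hτ : τ = τ' := by
      apply Equiv.ext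
      intro b
      have hb : b.val + 1 < S.card := by
        have := b.isLt
        have hE := Finset.card_erase_of_mem x.2
        omega
      have hb2 := congrArg (fun σ : Ranking S => σ ⟨b.val + 1, hb⟩) h
      simp only [consR_apply_succ] at hb2
      have hval : (τ b).1 = (τ' b).1 := congrArg (Subtype.val : {y // y ∈ S} → ι) hb2
      exact Subtype.ext hval
    rw [hτ]
  · rw [Fintype.card_sigma]
    have hcard : ∀ x : {y // y ∈ S},
        Fintype.card (Ranking (S.erase x.1)) = (S.card - 1)! := by
      intro x
      rw [Fintype.card_equiv ((Fintype.equivFinOfCardEq (Fintype.card_coe _)).symm)]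
      simp [Finset.card_erase_of_mem x.2]
    rw [Finset.sum_congr rfl (fun x _ => hcard x)]
    rw [Finset.sum_const, Fintype.card_equiv ((Fintype.equivFinOfCardEq (Fintype.card_coe S)).symm)]
    simp only [Fintype.card_fin, Fintype.card_coe, smul_eq_mul]
    obtain ⟨m, hm⟩ : ∃ m, S.card = m + 1 := ⟨S.card - 1, by omega⟩
    rw [hm]
    simp [Nat.factorial_succ]
    exact Or.inl hm

lemma sum_ranking_decomp (hS : 0 < S.card) (f : Ranking S → ℝ) :
    ∑ σ : Ranking S, f σ =
      ∑ x : {y // y ∈ S}, ∑ τ : Ranking (S.erase x.1), f (consR x τ) := by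
  rw [← Function.Bijective.sum_comp (consR_bijective hS) f]
  rw [← Finset.univ_sigma_univ, Finset.sum_sigma]

lemma sum_PLProb (θ : ι → ℝ) : ∀ (n : ℕ) (S : Finset ι), S.card = n →
    ∑ σ : Ranking S, PLProb θ S σ = 1 := by
  intro n
  induction n with
  | zero =>
    intro S hS
    have hS0 : S = ∅ := Finset.card_eq_zero.mp hS
    subst hS0
    have h1 : ∀ σ : Ranking (∅ : Finset ι), PLProb θ ∅ σ = 1 := by
      intro σ
      rw [PLProb]
      apply Finset.prod_eq_one
      intro a _
      exact absurd a.isLt (by simp)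
    rw [Finset.sum_congr rfl (fun σ _ => h1 σ)]
    rw [Finset.sum_const]
    haveI h2 : IsEmpty (Fin (∅ : Finset ι).card) := ⟨fun a => absurd a.isLt (by simp)⟩
    haveI h3 : IsEmpty {x // x ∈ (∅ : Finset ι)} := ⟨fun y => Finset.notMem_empty y.1 y.2⟩
    have : Fintype.card (Ranking (∅ : Finset ι)) = 1 := by
      rw [Fintype.card_equiv (Equiv.equivOfIsEmpty _ _)]
      simp
      exact Fintype.card_le_one_iff_subsingleton.mpr inferInstance
    simp [Finset.card_univ, this]
  | succ n ih =>
    intro S hS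
    have h0 : 0 < S.card := by omega
    rw [sum_ranking_decomp h0]
    have hx : ∀ x : {y // y ∈ S},
        ∑ τ : Ranking (S.erase x.1), PLProb θ S (consR x τ) =
          Real.exp (θ x.1) / ∑ y ∈ S, Real.exp (θ y) := by
      intro x
      rw [Finset.sum_congr rfl (fun τ _ => PLProb_consR θ x τ)]
      rw [← Finset.mul_sum]
      rw [ih (S.erase x.1) (by rw [Finset.card_erase_of_mem x.2]; omega)]
      ring
    rw [Finset.sum_congr rfl (fun x _ => hx x)]
    rw [← Finset.sum_div]
    rw [Finset.sum_coe_sort S (fun y => Real.exp (θ y))]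
    apply div_self
    have : 0 < ∑ y ∈ S, Real.exp (θ y) :=
      Finset.sum_pos (fun y _ => Real.exp_pos _) (Finset.card_pos.mp h0)
    linarith

end Helpers3
section Helpers4
set_option linter.unusedSectionVars false
open scoped Classical

variable {ι : Type*} [DecidableEq ι] {S : Finset ι}

lemma PLprobEvent_congr (θ : ι → ℝ) (E E' : Ranking S → Prop) (h : ∀ σ, E σ ↔ E' σ) :
    PLprobEvent θ S E = PLprobEvent θ S E' := by
  rw [PLprobEvent, PLprobEvent]
  exact Finset.sum_congr rfl fun σ _ => if_congr (h σ) rfl rfl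

lemma PLprobEvent_decomp (θ : ι → ℝ) (hS : 0 < S.card) (E : Ranking S → Prop) :
    PLprobEvent θ S E = ∑ x : {y // y ∈ S}, ∑ τ : Ranking (S.erase x.1),
      (if E (consR x τ) then
        Real.exp (θ x.1) / (∑ y ∈ S, Real.exp (θ y)) * PLProb θ (S.erase x.1) τ else 0) := by
  rw [PLprobEvent, sum_ranking_decomp hS]
  refine Finset.sum_congr rfl fun x _ => Finset.sum_congr rfl fun τ _ => ?_
  by_cases h : E (consR x τ)
  · rw [if_pos h, if_pos h, PLProb_consR]
  · rw [if_neg h, if_neg h]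

lemma sum_ite_mul_PL (θ : ι → ℝ) (T : Finset ι) (E : Ranking T → Prop)
    [inst : ∀ τ, Decidable (E τ)] (k : ℝ) :
    ∑ τ : Ranking T, (if E τ then k * PLProb θ T τ else 0) = k * PLprobEvent θ T E := by
  rw [PLprobEvent, Finset.mul_sum]
  refine Finset.sum_congr rfl fun τ _ => ?_
  by_cases h : E τ
  · rw [if_pos h, if_pos h]
  · rw [if_neg h, if_neg h, mul_zero]

lemma pre_consR (x : {y // y ∈ S}) (τ : Ranking (S.erase x.1)) (p : ℕ) (hp : 1 ≤ p)
    (Q : ℕ → ι → Prop) :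
    (∀ a : Fin S.card, a.val + 1 < p + 1 → Q a.val ((consR x τ) a).1) ↔
      (Q 0 x.1 ∧ ∀ b : Fin (S.erase x.1).card, b.val + 1 < p → Q (b.val + 1) (τ b).1) := by
  have hE := Finset.card_erase_of_mem x.2
  constructor
  · intro h
    constructor
    · have h0 := h ⟨0, card_pos_of_mem x⟩ (show 0 + 1 < p + 1 by omega)
      rwa [consR_apply_zero] at h0
    · intro b hb
      have hb1 : b.val + 1 < S.card := by have := b.isLt; omega
      have hbq := h ⟨b.val + 1, hb1⟩ (show b.val + 1 + 1 < p + 1 by omega)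
      have hval := consR_val_succ x τ (v := b.val) hb1 b.isLt
      rw [hval] at hbq
      exact hbq
  · rintro ⟨hQ0, hb⟩ a ha
    by_cases h0 : a.val = 0
    · have ha0 : a = ⟨0, card_pos_of_mem x⟩ := Fin.ext h0
      rw [ha0, consR_apply_zero]
      exact hQ0
    · have hbv : a.val - 1 < (S.erase x.1).card := by have := a.isLt; omega
      have hlt : a.val - 1 + 1 < S.card := by have := a.isLt; omega
      have ha1 : a = ⟨a.val - 1 + 1, hlt⟩ := Fin.ext (show a.val = a.val - 1 + 1 by omega)
      rw [ha1, consR_val_succ x τ hlt hbv]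
      exact hb ⟨a.val - 1, hbv⟩ (show a.val - 1 + 1 < p by omega)

lemma rank_consR_eq_one (x : {y // y ∈ S}) (τ : Ranking (S.erase x.1)) (j : ι) (hj : j ∈ S)
    (hxj : x.1 = j) : rankOf (consR x τ) ⟨j, hj⟩ = 1 := by
  have : (⟨j, hj⟩ : {y // y ∈ S}) = x := Subtype.ext hxj.symm
  rw [this, rankOf_consR_self]

lemma rank_consR_gt_one (x : {y // y ∈ S}) (τ : Ranking (S.erase x.1)) (j : ι) (hj : j ∈ S)
    (hxj : x.1 ≠ j) : 1 < rankOf (consR x τ) ⟨j, hj⟩ := by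
  rw [rankOf_consR_ne x τ j hj (fun h => hxj h.symm)]
  have := rankOf_pos (σ := τ) (i := ⟨j, Finset.mem_erase.mpr ⟨fun h => hxj h.symm, hj⟩⟩)
  omega

lemma key_lemma (θ : ι → ℝ) (p : ℕ) (hp : 1 ≤ p) :
    ∀ (S : Finset ι), p ≤ S.card - 1 → ∀ (i i' : ι) (hi : i ∈ S) (hi' : i' ∈ S), i ≠ i' →
    ∀ (Q : ℕ → ι → Prop),
    PLprobEvent θ S (fun σ => (rankOf σ ⟨i, hi⟩ = p ∧ p < rankOf σ ⟨i', hi'⟩) ∧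
        ∀ a : Fin S.card, a.val + 1 < p → Q a.val (σ a).1)
      = Real.exp (θ i) / (Real.exp (θ i) + Real.exp (θ i')) *
        PLprobEvent θ S (fun σ => ((rankOf σ ⟨i', hi'⟩ = p ∧ p < rankOf σ ⟨i, hi⟩) ∨
            (rankOf σ ⟨i, hi⟩ = p ∧ p < rankOf σ ⟨i', hi'⟩)) ∧
          ∀ a : Fin S.card, a.val + 1 < p → Q a.val (σ a).1) := by
  induction p, hp using Nat.le_induction with
  | base =>
    intro S hS i i' hi hi' hne Q
    have h0 : 0 < S.card := by omega
    set Z := ∑ y ∈ S, Real.exp (θ y) with hZ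
    have hZpos : 0 < Z := Finset.sum_pos (fun y _ => Real.exp_pos _) (Finset.card_pos.mp h0)
    rw [PLprobEvent_decomp θ h0, PLprobEvent_decomp θ h0]
    beta_reduce
    simp only [← hZ]
    have hrank_self := fun (x : {y // y ∈ S}) (τ : Ranking (S.erase x.1)) (j : ι)
      (hj : j ∈ S) (hxj : x.1 = j) => rank_consR_eq_one x τ j hj hxj
    have hrank_ne := fun (x : {y // y ∈ S}) (τ : Ranking (S.erase x.1)) (j : ι)
      (hj : j ∈ S) (hxj : x.1 ≠ j) => rank_consR_gt_one x τ j hj hxj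
    have hE1 : ∀ (x : {y // y ∈ S}) (τ : Ranking (S.erase x.1)),
        ((rankOf (consR x τ) ⟨i, hi⟩ = 1 ∧ 1 < rankOf (consR x τ) ⟨i', hi'⟩) ∧
          ∀ a : Fin S.card, a.val + 1 < 1 → Q a.val ((consR x τ) a).1) ↔ x.1 = i := by
      intro x τ
      constructor
      · rintro ⟨⟨h1, _⟩, _⟩
        by_contra hxi
        have := hrank_ne x τ i hi hxi
        omega
      · intro hx
        refine ⟨⟨hrank_self x τ i hi hx, hrank_ne x τ i' hi' (by rw [hx]; exact hne)⟩,
          fun a ha => absurd ha (by omega)⟩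
    have hE2 : ∀ (x : {y // y ∈ S}) (τ : Ranking (S.erase x.1)),
        (((rankOf (consR x τ) ⟨i', hi'⟩ = 1 ∧ 1 < rankOf (consR x τ) ⟨i, hi⟩) ∨
          (rankOf (consR x τ) ⟨i, hi⟩ = 1 ∧ 1 < rankOf (consR x τ) ⟨i', hi'⟩)) ∧
          ∀ a : Fin S.card, a.val + 1 < 1 → Q a.val ((consR x τ) a).1) ↔
          (x.1 = i' ∨ x.1 = i) := by
      intro x τ
      constructor
      · rintro ⟨h1 | h1, _⟩
        · left
          by_contra hxi
          have := hrank_ne x τ i' hi' hxi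
          omega
        · right
          by_contra hxi
          have := hrank_ne x τ i hi hxi
          omega
      · rintro (hx | hx)
        · exact ⟨Or.inl ⟨hrank_self x τ i' hi' hx,
            hrank_ne x τ i hi (by rw [hx]; exact hne.symm)⟩,
            fun a ha => absurd ha (by omega)⟩
        · exact ⟨Or.inr ⟨hrank_self x τ i hi hx,
            hrank_ne x τ i' hi' (by rw [hx]; exact hne)⟩,
            fun a ha => absurd ha (by omega)⟩
    have hL : ∀ x : {y // y ∈ S}, ∑ τ : Ranking (S.erase x.1),
        (if ((rankOf (consR x τ) ⟨i, hi⟩ = 1 ∧ 1 < rankOf (consR x τ) ⟨i', hi'⟩) ∧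
            ∀ a : Fin S.card, a.val + 1 < 1 → Q a.val ((consR x τ) a).1) then
          Real.exp (θ x.1) / Z * PLProb θ (S.erase x.1) τ else 0)
        = if x.1 = i then Real.exp (θ x.1) / Z else 0 := by
      intro x
      by_cases hx : x.1 = i
      · rw [if_pos hx]
        rw [Finset.sum_congr rfl (fun τ _ => if_pos ((hE1 x τ).mpr hx))]
        rw [← Finset.mul_sum, sum_PLProb θ (S.erase x.1).card (S.erase x.1) rfl, mul_one]
      · rw [if_neg hx]
        rw [Finset.sum_congr rfl (fun τ _ => if_neg (fun hc => hx ((hE1 x τ).mp hc)))]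
        simp
    have hR : ∀ x : {y // y ∈ S}, ∑ τ : Ranking (S.erase x.1),
        (if (((rankOf (consR x τ) ⟨i', hi'⟩ = 1 ∧ 1 < rankOf (consR x τ) ⟨i, hi⟩) ∨
            (rankOf (consR x τ) ⟨i, hi⟩ = 1 ∧ 1 < rankOf (consR x τ) ⟨i', hi'⟩)) ∧
            ∀ a : Fin S.card, a.val + 1 < 1 → Q a.val ((consR x τ) a).1) then
          Real.exp (θ x.1) / Z * PLProb θ (S.erase x.1) τ else 0)
        = if (x.1 = i' ∨ x.1 = i) then Real.exp (θ x.1) / Z else 0 := by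
      intro x
      by_cases hx : (x.1 = i' ∨ x.1 = i)
      · rw [if_pos hx]
        rw [Finset.sum_congr rfl (fun τ _ => if_pos ((hE2 x τ).mpr hx))]
        rw [← Finset.mul_sum, sum_PLProb θ (S.erase x.1).card (S.erase x.1) rfl, mul_one]
      · rw [if_neg hx]
        rw [Finset.sum_congr rfl (fun τ _ => if_neg (fun hc => hx ((hE2 x τ).mp hc)))]
        simp
    rw [Finset.sum_congr rfl (fun x _ => hL x), Finset.sum_congr rfl (fun x _ => hR x)]
    rw [Finset.sum_coe_sort S (fun y => if y = i then Real.exp (θ y) / Z else 0)]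
    rw [Finset.sum_coe_sort S (fun y => if (y = i' ∨ y = i) then Real.exp (θ y) / Z else 0)]
    rw [Finset.sum_ite_eq' S i (fun y => Real.exp (θ y) / Z), if_pos hi]
    have hsplit : ∀ y ∈ S, (if (y = i' ∨ y = i) then Real.exp (θ y) / Z else 0)
        = (if y = i' then Real.exp (θ y) / Z else 0) + (if y = i then Real.exp (θ y) / Z else 0) := by
      intro y _
      by_cases h1 : y = i'
      · have h2 : y ≠ i := by rw [h1]; exact hne.symm
        rw [if_pos (Or.inl h1), if_pos h1, if_neg h2, add_zero]
      · by_cases h2 : y = i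
        · rw [if_pos (Or.inr h2), if_neg h1, if_pos h2, zero_add]
        · rw [if_neg (by tauto), if_neg h1, if_neg h2, add_zero]
    rw [Finset.sum_congr rfl hsplit, Finset.sum_add_distrib]
    rw [Finset.sum_ite_eq' S i' (fun y => Real.exp (θ y) / Z), if_pos hi']
    rw [Finset.sum_ite_eq' S i (fun y => Real.exp (θ y) / Z), if_pos hi]
    have he : 0 < Real.exp (θ i) + Real.exp (θ i') := by positivity
    field_simp
    ring
  | succ p hp IH =>
    intro S hS i i' hi hi' hne Q
    have h0 : 0 < S.card := by omega
    rw [PLprobEvent_decomp θ h0, PLprobEvent_decomp θ h0]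
    beta_reduce
    rw [Finset.mul_sum]
    refine Finset.sum_congr rfl fun x _ => ?_
    have hE := Finset.card_erase_of_mem x.2
    by_cases hxi : x.1 = i
    · -- both sides vanish
      have hLz : ∀ τ : Ranking (S.erase x.1),
          ¬ ((rankOf (consR x τ) ⟨i, hi⟩ = p + 1 ∧ p + 1 < rankOf (consR x τ) ⟨i', hi'⟩) ∧
            ∀ a : Fin S.card, a.val + 1 < p + 1 → Q a.val ((consR x τ) a).1) := by
        rintro τ ⟨⟨h1, _⟩, _⟩
        rw [rank_consR_eq_one x τ i hi hxi] at h1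
        omega
      have hRz : ∀ τ : Ranking (S.erase x.1),
          ¬ (((rankOf (consR x τ) ⟨i', hi'⟩ = p + 1 ∧ p + 1 < rankOf (consR x τ) ⟨i, hi⟩) ∨
            (rankOf (consR x τ) ⟨i, hi⟩ = p + 1 ∧ p + 1 < rankOf (consR x τ) ⟨i', hi'⟩)) ∧
            ∀ a : Fin S.card, a.val + 1 < p + 1 → Q a.val ((consR x τ) a).1) := by
        rintro τ ⟨h1 | h1, _⟩
        · have := rank_consR_eq_one x τ i hi hxi
          omega
        · have := rank_consR_eq_one x τ i hi hxi
          omega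
      conv_lhs => arg 2; ext τ; rw [if_neg (hLz τ)]
      conv_rhs => rw [mul_comm]; arg 1; arg 2; ext τ; rw [if_neg (hRz τ)]
      simp
    · by_cases hxi' : x.1 = i'
      · have hLz : ∀ τ : Ranking (S.erase x.1),
            ¬ ((rankOf (consR x τ) ⟨i, hi⟩ = p + 1 ∧ p + 1 < rankOf (consR x τ) ⟨i', hi'⟩) ∧
              ∀ a : Fin S.card, a.val + 1 < p + 1 → Q a.val ((consR x τ) a).1) := by
          rintro τ ⟨⟨_, h2⟩, _⟩
          rw [rank_consR_eq_one x τ i' hi' hxi'] at h2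
          omega
        have hRz : ∀ τ : Ranking (S.erase x.1),
            ¬ (((rankOf (consR x τ) ⟨i', hi'⟩ = p + 1 ∧ p + 1 < rankOf (consR x τ) ⟨i, hi⟩) ∨
              (rankOf (consR x τ) ⟨i, hi⟩ = p + 1 ∧ p + 1 < rankOf (consR x τ) ⟨i', hi'⟩)) ∧
              ∀ a : Fin S.card, a.val + 1 < p + 1 → Q a.val ((consR x τ) a).1) := by
          rintro τ ⟨h1 | h1, _⟩
          · have := rank_consR_eq_one x τ i' hi' hxi'
            omega
          · have := rank_consR_eq_one x τ i' hi' hxi'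
            omega
        conv_lhs => arg 2; ext τ; rw [if_neg (hLz τ)]
        conv_rhs => rw [mul_comm]; arg 1; arg 2; ext τ; rw [if_neg (hRz τ)]
        simp
      · -- main case
        have hmi : i ∈ S.erase x.1 := Finset.mem_erase.mpr ⟨fun h => hxi h.symm, hi⟩
        have hmi' : i' ∈ S.erase x.1 := Finset.mem_erase.mpr ⟨fun h => hxi' h.symm, hi'⟩
        have hiffL : ∀ τ : Ranking (S.erase x.1),
            ((rankOf (consR x τ) ⟨i, hi⟩ = p + 1 ∧ p + 1 < rankOf (consR x τ) ⟨i', hi'⟩) ∧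
              ∀ a : Fin S.card, a.val + 1 < p + 1 → Q a.val ((consR x τ) a).1) ↔
            (Q 0 x.1 ∧ ((rankOf τ ⟨i, hmi⟩ = p ∧ p < rankOf τ ⟨i', hmi'⟩) ∧
              ∀ b : Fin (S.erase x.1).card, b.val + 1 < p → Q (b.val + 1) (τ b).1)) := by
          intro τ
          rw [rankOf_consR_ne x τ i hi (fun h => hxi h.symm),
            rankOf_consR_ne x τ i' hi' (fun h => hxi' h.symm),
            pre_consR x τ p hp Q]
          constructor
          · rintro ⟨⟨h1, h2⟩, hq0, hpre⟩
            exact ⟨hq0, ⟨by omega, by omega⟩, hpre⟩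
          · rintro ⟨hq0, ⟨h1, h2⟩, hpre⟩
            exact ⟨⟨by omega, by omega⟩, hq0, hpre⟩
        have hiffR : ∀ τ : Ranking (S.erase x.1),
            (((rankOf (consR x τ) ⟨i', hi'⟩ = p + 1 ∧ p + 1 < rankOf (consR x τ) ⟨i, hi⟩) ∨
              (rankOf (consR x τ) ⟨i, hi⟩ = p + 1 ∧ p + 1 < rankOf (consR x τ) ⟨i', hi'⟩)) ∧
              ∀ a : Fin S.card, a.val + 1 < p + 1 → Q a.val ((consR x τ) a).1) ↔
            (Q 0 x.1 ∧ (((rankOf τ ⟨i', hmi'⟩ = p ∧ p < rankOf τ ⟨i, hmi⟩) ∨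
              (rankOf τ ⟨i, hmi⟩ = p ∧ p < rankOf τ ⟨i', hmi'⟩)) ∧
              ∀ b : Fin (S.erase x.1).card, b.val + 1 < p → Q (b.val + 1) (τ b).1)) := by
          intro τ
          rw [rankOf_consR_ne x τ i hi (fun h => hxi h.symm),
            rankOf_consR_ne x τ i' hi' (fun h => hxi' h.symm),
            pre_consR x τ p hp Q]
          constructor
          · rintro ⟨h1 | h1, hq0, hpre⟩
            · exact ⟨hq0, Or.inl ⟨by omega, by omega⟩, hpre⟩
            · exact ⟨hq0, Or.inr ⟨by omega, by omega⟩, hpre⟩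
          · rintro ⟨hq0, h1 | h1, hpre⟩
            · exact ⟨Or.inl ⟨by omega, by omega⟩, hq0, hpre⟩
            · exact ⟨Or.inr ⟨by omega, by omega⟩, hq0, hpre⟩
        by_cases hq : Q 0 x.1
        · have hLx : ∑ τ : Ranking (S.erase x.1),
              (@ite ℝ ((rankOf (consR x τ) ⟨i, hi⟩ = p + 1 ∧ p + 1 < rankOf (consR x τ) ⟨i', hi'⟩) ∧
                ∀ a : Fin S.card, a.val + 1 < p + 1 → Q a.val ((consR x τ) a).1)
                (Classical.propDecidable _)
                (Real.exp (θ x.1) / (∑ y ∈ S, Real.exp (θ y)) * PLProb θ (S.erase x.1) τ) 0)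
              = Real.exp (θ x.1) / (∑ y ∈ S, Real.exp (θ y)) *
                PLprobEvent θ (S.erase x.1) (fun τ =>
                  (rankOf τ ⟨i, hmi⟩ = p ∧ p < rankOf τ ⟨i', hmi'⟩) ∧
                  ∀ b : Fin (S.erase x.1).card, b.val + 1 < p → Q (b.val + 1) (τ b).1) := by
            have step2 := sum_ite_mul_PL θ (S.erase x.1) (fun τ =>
                (rankOf τ ⟨i, hmi⟩ = p ∧ p < rankOf τ ⟨i', hmi'⟩) ∧
                ∀ b : Fin (S.erase x.1).card, b.val + 1 < p → Q (b.val + 1) (τ b).1)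
              (Real.exp (θ x.1) / (∑ y ∈ S, Real.exp (θ y)))
            refine Eq.trans (Finset.sum_congr rfl (fun τ _ => ?_)) step2
            by_cases h : (rankOf τ ⟨i, hmi⟩ = p ∧ p < rankOf τ ⟨i', hmi'⟩) ∧
              ∀ b : Fin (S.erase x.1).card, b.val + 1 < p → Q (b.val + 1) (τ b).1
            · rw [if_pos ((hiffL τ).mpr ⟨hq, h⟩), if_pos h]
            · rw [if_neg (fun hc => h (((hiffL τ).mp hc).2)), if_neg h]
          have hRx : ∑ τ : Ranking (S.erase x.1),
              (@ite ℝ (((rankOf (consR x τ) ⟨i', hi'⟩ = p + 1 ∧ p + 1 < rankOf (consR x τ) ⟨i, hi⟩) ∨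
                (rankOf (consR x τ) ⟨i, hi⟩ = p + 1 ∧ p + 1 < rankOf (consR x τ) ⟨i', hi'⟩)) ∧
                ∀ a : Fin S.card, a.val + 1 < p + 1 → Q a.val ((consR x τ) a).1)
                (Classical.propDecidable _)
                (Real.exp (θ x.1) / (∑ y ∈ S, Real.exp (θ y)) * PLProb θ (S.erase x.1) τ) 0)
              = Real.exp (θ x.1) / (∑ y ∈ S, Real.exp (θ y)) *
                PLprobEvent θ (S.erase x.1) (fun τ =>
                  ((rankOf τ ⟨i', hmi'⟩ = p ∧ p < rankOf τ ⟨i, hmi⟩) ∨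
                    (rankOf τ ⟨i, hmi⟩ = p ∧ p < rankOf τ ⟨i', hmi'⟩)) ∧
                  ∀ b : Fin (S.erase x.1).card, b.val + 1 < p → Q (b.val + 1) (τ b).1) := by
            have step2 := sum_ite_mul_PL θ (S.erase x.1) (fun τ =>
                ((rankOf τ ⟨i', hmi'⟩ = p ∧ p < rankOf τ ⟨i, hmi⟩) ∨
                  (rankOf τ ⟨i, hmi⟩ = p ∧ p < rankOf τ ⟨i', hmi'⟩)) ∧
                ∀ b : Fin (S.erase x.1).card, b.val + 1 < p → Q (b.val + 1) (τ b).1)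
              (Real.exp (θ x.1) / (∑ y ∈ S, Real.exp (θ y)))
            refine Eq.trans (Finset.sum_congr rfl (fun τ _ => ?_)) step2
            by_cases h : (((rankOf τ ⟨i', hmi'⟩ = p ∧ p < rankOf τ ⟨i, hmi⟩) ∨
                (rankOf τ ⟨i, hmi⟩ = p ∧ p < rankOf τ ⟨i', hmi'⟩)) ∧
                ∀ b : Fin (S.erase x.1).card, b.val + 1 < p → Q (b.val + 1) (τ b).1)
            · rw [if_pos ((hiffR τ).mpr ⟨hq, h⟩), if_pos h]
            · rw [if_neg (fun hc => h (((hiffR τ).mp hc).2)), if_neg h]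
          rw [hLx, hRx]
          have hIH : PLprobEvent θ (S.erase x.1) (fun τ =>
                  (rankOf τ ⟨i, hmi⟩ = p ∧ p < rankOf τ ⟨i', hmi'⟩) ∧
                  ∀ b : Fin (S.erase x.1).card, b.val + 1 < p → Q (b.val + 1) (τ b).1)
              = Real.exp (θ i) / (Real.exp (θ i) + Real.exp (θ i')) *
                PLprobEvent θ (S.erase x.1) (fun τ =>
                  ((rankOf τ ⟨i', hmi'⟩ = p ∧ p < rankOf τ ⟨i, hmi⟩) ∨
                    (rankOf τ ⟨i, hmi⟩ = p ∧ p < rankOf τ ⟨i', hmi'⟩)) ∧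
                  ∀ b : Fin (S.erase x.1).card, b.val + 1 < p → Q (b.val + 1) (τ b).1) :=
            IH (S.erase x.1) (by omega) i i' hmi hmi' hne (fun k y => Q (k + 1) y)
          rw [hIH]
          ring
        · conv_lhs => arg 2; ext τ; rw [if_neg (fun hc => hq ((hiffL τ).mp hc).1)]
          conv_rhs => rw [mul_comm]; arg 1; arg 2; ext τ; rw [if_neg (fun hc => hq ((hiffR τ).mp hc).1)]
          simp
end Helpers4

theorem statement_11 {ι : Type*} [DecidableEq ι]
    (θstar : ι → ℝ) (S : Finset ι)
    (p : ℕ) (hp1 : 1 ≤ p) (hp2 : p ≤ S.card - 1)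
    (i i' : ι) (hi : i ∈ S) (hi' : i' ∈ S) (hne : i ≠ i') :
    -- (1) pairwise outcomes extracted by position-p rank-breaking are unbiased
    (PLprobEvent θstar S (fun σ =>
        rankOf σ ⟨i, hi⟩ < rankOf σ ⟨i', hi'⟩ ∧
        ((rankOf σ ⟨i', hi'⟩ = p ∧ p < rankOf σ ⟨i, hi⟩) ∨
         (rankOf σ ⟨i, hi⟩ = p ∧ p < rankOf σ ⟨i', hi'⟩))) =
      (Real.exp (θstar i) / (Real.exp (θstar i) + Real.exp (θstar i'))) *
        PLprobEvent θstar S (fun σ =>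
          (rankOf σ ⟨i', hi'⟩ = p ∧ p < rankOf σ ⟨i, hi⟩) ∨
          (rankOf σ ⟨i, hi⟩ = p ∧ p < rankOf σ ⟨i', hi'⟩)))
    ∧
    -- (2) the same holds conditioned additionally on the (ordered) list of items
    -- ranked above position p
    (∀ t : ℕ → ι,
      PLprobEvent θstar S (fun σ =>
        (rankOf σ ⟨i, hi⟩ < rankOf σ ⟨i', hi'⟩ ∧
          ((rankOf σ ⟨i', hi'⟩ = p ∧ p < rankOf σ ⟨i, hi⟩) ∨
           (rankOf σ ⟨i, hi⟩ = p ∧ p < rankOf σ ⟨i', hi'⟩))) ∧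
        (∀ a : Fin S.card, a.val + 1 < p → (σ a).1 = t a.val)) =
      (Real.exp (θstar i) / (Real.exp (θstar i) + Real.exp (θstar i'))) *
        PLprobEvent θstar S (fun σ =>
          ((rankOf σ ⟨i', hi'⟩ = p ∧ p < rankOf σ ⟨i, hi⟩) ∨
           (rankOf σ ⟨i, hi⟩ = p ∧ p < rankOf σ ⟨i', hi'⟩)) ∧
          (∀ a : Fin S.card, a.val + 1 < p → (σ a).1 = t a.val))) := by
  constructor
  · have hkey := key_lemma θstar p hp1 S hp2 i i' hi hi' hne (fun _ _ => True)
    have h1 : PLprobEvent θstar S (fun σ =>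
        rankOf σ ⟨i, hi⟩ < rankOf σ ⟨i', hi'⟩ ∧
        ((rankOf σ ⟨i', hi'⟩ = p ∧ p < rankOf σ ⟨i, hi⟩) ∨
         (rankOf σ ⟨i, hi⟩ = p ∧ p < rankOf σ ⟨i', hi'⟩))) =
        PLprobEvent θstar S (fun σ =>
          (rankOf σ ⟨i, hi⟩ = p ∧ p < rankOf σ ⟨i', hi'⟩) ∧
          ∀ a : Fin S.card, a.val + 1 < p → (fun _ _ => True) a.val (σ a).1) := by
      refine PLprobEvent_congr θstar _ _ (fun σ => ?_)
      constructor
      · rintro ⟨hlt, h1 | h1⟩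
        · exact absurd hlt (by omega)
        · exact ⟨h1, fun _ _ => trivial⟩
      · rintro ⟨⟨h1, h2⟩, _⟩
        exact ⟨by omega, Or.inr ⟨h1, h2⟩⟩
    have h2 : PLprobEvent θstar S (fun σ =>
        (rankOf σ ⟨i', hi'⟩ = p ∧ p < rankOf σ ⟨i, hi⟩) ∨
        (rankOf σ ⟨i, hi⟩ = p ∧ p < rankOf σ ⟨i', hi'⟩)) =
        PLprobEvent θstar S (fun σ =>
          ((rankOf σ ⟨i', hi'⟩ = p ∧ p < rankOf σ ⟨i, hi⟩) ∨
           (rankOf σ ⟨i, hi⟩ = p ∧ p < rankOf σ ⟨i', hi'⟩)) ∧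
          ∀ a : Fin S.card, a.val + 1 < p → (fun _ _ => True) a.val (σ a).1) := by
      refine PLprobEvent_congr θstar _ _ (fun σ => ?_)
      constructor
      · intro h
        exact ⟨h, fun _ _ => trivial⟩
      · rintro ⟨h, _⟩
        exact h
    rw [h1, h2]
    exact hkey
  · intro t
    have hkey := key_lemma θstar p hp1 S hp2 i i' hi hi' hne (fun k y => y = t k)
    have h1 : PLprobEvent θstar S (fun σ =>
        (rankOf σ ⟨i, hi⟩ < rankOf σ ⟨i', hi'⟩ ∧
          ((rankOf σ ⟨i', hi'⟩ = p ∧ p < rankOf σ ⟨i, hi⟩) ∨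
           (rankOf σ ⟨i, hi⟩ = p ∧ p < rankOf σ ⟨i', hi'⟩))) ∧
        (∀ a : Fin S.card, a.val + 1 < p → (σ a).1 = t a.val)) =
        PLprobEvent θstar S (fun σ =>
          (rankOf σ ⟨i, hi⟩ = p ∧ p < rankOf σ ⟨i', hi'⟩) ∧
          ∀ a : Fin S.card, a.val + 1 < p → (fun k y => y = t k) a.val (σ a).1) := by
      refine PLprobEvent_congr θstar _ _ (fun σ => ?_)
      constructor
      · rintro ⟨⟨hlt, h1 | h1⟩, hpre⟩
        · exact absurd hlt (by omega)
        · exact ⟨h1, hpre⟩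
      · rintro ⟨⟨h1, h2⟩, hpre⟩
        exact ⟨⟨by omega, Or.inr ⟨h1, h2⟩⟩, hpre⟩
    have h2 : PLprobEvent θstar S (fun σ =>
        ((rankOf σ ⟨i', hi'⟩ = p ∧ p < rankOf σ ⟨i, hi⟩) ∨
         (rankOf σ ⟨i, hi⟩ = p ∧ p < rankOf σ ⟨i', hi'⟩)) ∧
        (∀ a : Fin S.card, a.val + 1 < p → (σ a).1 = t a.val)) =
        PLprobEvent θstar S (fun σ =>
          ((rankOf σ ⟨i', hi'⟩ = p ∧ p < rankOf σ ⟨i, hi⟩) ∨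
           (rankOf σ ⟨i, hi⟩ = p ∧ p < rankOf σ ⟨i', hi'⟩)) ∧
          ∀ a : Fin S.card, a.val + 1 < p → (fun k y => y = t k) a.val (σ a).1) := by
      refine PLprobEvent_congr θstar _ _ (fun σ => Iff.rfl)
    rw [h1, h2]
    exact hkey
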